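/- (Joint scattering removes the relative-velocity singularity.) Fix v̄_i ∈ B_R and suppose (v_i, v_j) are the velocities after a collision parametrized by (v*, ν*) ∈ B_R × 𝕊¹, in either of the two forms: (v_i, v_j) = (v̄_i, v*) or v_i = v̄_i + ((v* - v̄_i)·ν*)ν*, v_j = v* - ((v* - v̄_i)·ν*)ν*. Then in both cases |v_i - v_j| = |v* - v̄_i|, and consequently ∫_{𝕊¹}∫_{B_R} |v_i - v_j|^{-1} |(v* - v̄_i)·ν*| dv* dν* ≤ C R². -/

import Mathlib

set_option linter.unnecessarySimpa false


open MeasureTheory Metric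
open scoped RealInnerProductSpace

noncomputable section

/-- The plane `ℝ²`. -/
abbrev E2 : Type := EuclideanSpace ℝ (Fin 2)

/-- The surface measure on the unit circle `𝕊¹ ⊂ ℝ²`. -/
def sphμ : Measure (sphere (0 : E2) 1) := (volume : Measure E2).toSphere

lemma scatter_norm (vbar v ν : E2) (hν : ‖ν‖ = 1) :
    ‖(vbar + ⟪v - vbar, ν⟫ • ν) - (v - ⟪v - vbar, ν⟫ • ν)‖ = ‖v - vbar‖ := by
  set w : E2 := v - vbar with hw
  set c : ℝ := ⟪w, ν⟫ with hc
  have h1 : (vbar + c • ν) - (v - c • ν) = (2 * c) • ν - w := by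
    rw [hw]; module
  rw [h1]
  have hsq : ‖(2 * c) • ν - w‖ ^ 2 = ‖w‖ ^ 2 := by
    rw [norm_sub_sq_real, norm_smul, real_inner_smul_left, hν]
    have : ⟪ν, w⟫ = c := by rw [hc, real_inner_comm]
    rw [this]
    simp [abs_mul]
    ring_nf
    nlinarith [sq_abs c]
  have h2 := congrArg Real.sqrt hsq
  simpa [Real.sqrt_sq (norm_nonneg _)] using h2

lemma integrand_le_one (vbar v ν : E2) (hν : ‖ν‖ = 1) :
    ‖(vbar + ⟪v - vbar, ν⟫ • ν) - (v - ⟪v - vbar, ν⟫ • ν)‖⁻¹ * |⟪v - vbar, ν⟫| ≤ 1 := by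
  rw [scatter_norm vbar v ν hν]
  rcases eq_or_ne (v - vbar) 0 with h | h
  · simp [h]
  · have h1 : |⟪v - vbar, ν⟫| ≤ ‖v - vbar‖ := by
      calc |⟪v - vbar, ν⟫| ≤ ‖v - vbar‖ * ‖ν‖ := abs_real_inner_le_norm _ _
        _ = ‖v - vbar‖ := by rw [hν, mul_one]
    have h2 : (0 : ℝ) < ‖v - vbar‖ := norm_pos_iff.mpr h
    rw [inv_mul_le_iff₀ h2]
    nlinarith

/-- Joint scattering removes the relative-velocity singularity: in both
collision forms `(v_i, v_j) = (v̄_i, v*)` and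
`v_i = v̄_i + ((v*-v̄_i)·ν*)ν*`, `v_j = v* - ((v*-v̄_i)·ν*)ν*` one has
`|v_i - v_j| = |v* - v̄_i|`, and consequently
`∫_{𝕊¹}∫_{B_R} |v_i - v_j|⁻¹ |(v* - v̄_i)·ν*| dv* dν* ≤ C R²`. -/
theorem statement13 :
    ∃ C : ℝ, 0 < C ∧
      ∀ (R : ℝ) (vbar : E2), 1 < R → ‖vbar‖ ≤ R →
        (∀ (v : E2) (ν : E2), ‖ν‖ = 1 →
          ‖vbar - v‖ = ‖v - vbar‖ ∧
          ‖(vbar + ⟪v - vbar, ν⟫ • ν) - (v - ⟪v - vbar, ν⟫ • ν)‖ = ‖v - vbar‖) ∧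
        (∫ ν : sphere (0 : E2) 1, ∫ v in Metric.ball (0 : E2) R,
            ‖(vbar + ⟪v - vbar, (ν : E2)⟫ • (ν : E2)) -
              (v - ⟪v - vbar, (ν : E2)⟫ • (ν : E2))‖⁻¹ * |⟪v - vbar, (ν : E2)⟫|
          ∂volume ∂sphμ)
          ≤ C * R ^ 2 := by
  haveI : IsFiniteMeasure sphμ := by unfold sphμ; infer_instance
  set A : ℝ := (sphμ Set.univ).toReal with hA
  set K : ℝ := ((volume : Measure E2) (ball (0 : E2) 1)).toReal with hK
  have hA0 : 0 ≤ A := ENNReal.toReal_nonneg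
  have hK0 : 0 ≤ K := ENNReal.toReal_nonneg
  refine ⟨A * K + 1, by positivity, fun R vbar hR hvbar => ?_⟩
  refine ⟨fun v ν hν => ⟨norm_sub_rev _ _, scatter_norm vbar v ν hν⟩, ?_⟩
  -- volume of ball of radius R
  have hball : ((volume : Measure E2) (ball (0 : E2) R)).toReal = R ^ 2 * K := by
    rw [Measure.addHaar_ball volume (0 : E2) (by linarith : (0 : ℝ) ≤ R)]
    rw [ENNReal.toReal_mul, ENNReal.toReal_ofReal (by positivity)]
    congr 1
    simp [finrank_euclideanSpace]
  have hRpos : (0 : ℝ) < R := by linarith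
  -- inner integral bound
  have hinner : ∀ ν : sphere (0 : E2) 1,
      ‖∫ v in ball (0 : E2) R,
          ‖(vbar + ⟪v - vbar, (ν : E2)⟫ • (ν : E2)) -
            (v - ⟪v - vbar, (ν : E2)⟫ • (ν : E2))‖⁻¹ * |⟪v - vbar, (ν : E2)⟫| ∂volume‖
        ≤ R ^ 2 * K := by
    intro ν
    have hν : ‖(ν : E2)‖ = 1 := by
      have := ν.2
      simpa [mem_sphere_iff_norm] using this
    calc ‖∫ v in ball (0 : E2) R,
            ‖(vbar + ⟪v - vbar, (ν : E2)⟫ • (ν : E2)) -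
              (v - ⟪v - vbar, (ν : E2)⟫ • (ν : E2))‖⁻¹ * |⟪v - vbar, (ν : E2)⟫| ∂volume‖
        ≤ 1 * ((volume : Measure E2) (ball (0 : E2) R)).toReal := by
          apply norm_setIntegral_le_of_norm_le_const measure_ball_lt_top
          intro v _
          rw [Real.norm_eq_abs, abs_of_nonneg (by positivity)]
          exact integrand_le_one vbar v (ν : E2) hν
      _ = R ^ 2 * K := by rw [one_mul, hball]
  -- outer integral bound
  calc (∫ ν : sphere (0 : E2) 1, ∫ v in ball (0 : E2) R,
          ‖(vbar + ⟪v - vbar, (ν : E2)⟫ • (ν : E2)) -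
            (v - ⟪v - vbar, (ν : E2)⟫ • (ν : E2))‖⁻¹ * |⟪v - vbar, (ν : E2)⟫| ∂volume ∂sphμ)
      ≤ ‖∫ ν : sphere (0 : E2) 1, ∫ v in ball (0 : E2) R,
          ‖(vbar + ⟪v - vbar, (ν : E2)⟫ • (ν : E2)) -
            (v - ⟪v - vbar, (ν : E2)⟫ • (ν : E2))‖⁻¹ * |⟪v - vbar, (ν : E2)⟫| ∂volume ∂sphμ‖ :=
        le_abs_self _
    _ ≤ (R ^ 2 * K) * A := by
        rw [hA]
        exact norm_integral_le_of_norm_le_const (Filter.Eventually.of_forall hinner)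
    _ ≤ (A * K + 1) * R ^ 2 := by nlinarith [sq_nonneg R]
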